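/- Let e be a (2,2,2) empirical model whose A-marginals m(i_A, i_B)(o_A) = Σ_{o_B} e_{(i_A,i_B)}(o_A, o_B) are all strictly positive. Define γ* = min over i_A ∈ {0,1} and o_A ∈ {0,1} of 1 − |m(i_A,0)(o_A) − m(i_A,1)(o_A)|, and assume γ* > 0. Then there exists an A→B-causal empirical model e' such that γ* · e'_{(i)}(o) ≤ e_{(i)}(o) for all inputs i and outputs o. Hence the causal fraction of e with respect to A → B equals γ*. -/

import Mathlib

/-- A (2,2,2) empirical model: a probability distribution on output pairs for
each input pair. -/
def IsEM (e : Bool × Bool → Bool × Bool → ℝ) : Prop :=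
  (∀ i o, 0 ≤ e i o) ∧ (∀ i, ∑ o : Bool × Bool, e i o = 1)

/-- The A-marginal `m(i_A, i_B)(o_A) = Σ_{o_B} e_{(i_A,i_B)}(o_A, o_B)`. -/
def margA (e : Bool × Bool → Bool × Bool → ℝ) (iA iB oA : Bool) : ℝ :=
  ∑ oB : Bool, e (iA, iB) (oA, oB)

/-- Compatibility with the causal order A → B: the A-marginal is independent of `i_B`. -/
def CausalAB (e : Bool × Bool → Bool × Bool → ℝ) : Prop :=
  ∀ iA iB iB' oA, margA e iA iB oA = margA e iA iB' oA

/-- The causal fraction of `e` with respect to A → B. -/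
noncomputable def causalFractionAB (e : Bool × Bool → Bool × Bool → ℝ) : ℝ :=
  sSup {γ : ℝ | γ ∈ Set.Icc (0 : ℝ) 1 ∧
    ∃ e', IsEM e' ∧ CausalAB e' ∧ ∀ i o, γ * e' i o ≤ e i o}

lemma margA_add (e : Bool × Bool → Bool × Bool → ℝ) (he : IsEM e) (iA iB : Bool) :
    margA e iA iB false + margA e iA iB true = 1 := by
  have h := he.2 (iA, iB)
  rw [Fintype.sum_prod_type] at h
  simp only [Fintype.sum_bool] at h
  unfold margA
  simp only [Fintype.sum_bool]
  linarith

/-- if all A-marginals are strictly positive and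
`γ* = min_{i_A, o_A} (1 - |m(i_A,0)(o_A) - m(i_A,1)(o_A)|) > 0`, then `γ*` is
achieved by some A→B-causal model, and the causal fraction equals `γ*`. -/
theorem causalFraction_attained (e : Bool × Bool → Bool × Bool → ℝ)
    (he : IsEM e) (hpos : ∀ iA iB oA : Bool, 0 < margA e iA iB oA)
    (γstar : ℝ)
    (hγstar : γstar =
      min (min (1 - |margA e false false false - margA e false true false|)
               (1 - |margA e false false true - margA e false true true|))
          (min (1 - |margA e true false false - margA e true true false|)
               (1 - |margA e true false true - margA e true true true|)))
    (hpos' : 0 < γstar) :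
    (∃ e', IsEM e' ∧ CausalAB e' ∧ ∀ i o, γstar * e' i o ≤ e i o) ∧
      causalFractionAB e = γstar := by
  obtain ⟨hnn, hsum⟩ := he
  have hm1 : ∀ iA iB : Bool, margA e iA iB false + margA e iA iB true = 1 :=
    margA_add e ⟨hnn, hsum⟩
  -- mn and s
  set mn : Bool → Bool → ℝ := fun iA oA => min (margA e iA false oA) (margA e iA true oA)
    with hmn_def
  set s : Bool → ℝ := fun iA => mn iA false + mn iA true with hs_def
  have hmn_pos : ∀ iA oA, 0 < mn iA oA := fun iA oA =>
    lt_min (hpos iA false oA) (hpos iA true oA)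
  have hmn_le : ∀ iA iB oA, mn iA oA ≤ margA e iA iB oA := by
    intro iA iB oA
    cases iB
    · exact min_le_left _ _
    · exact min_le_right _ _
  have habs : ∀ iA : Bool,
      |margA e iA false true - margA e iA true true| =
        |margA e iA false false - margA e iA true false| := by
    intro iA
    have h1 := hm1 iA false
    have h2 := hm1 iA true
    have : margA e iA false true - margA e iA true true =
        -(margA e iA false false - margA e iA true false) := by linarith
    rw [this, abs_neg]
  have hs_eq : ∀ iA : Bool,
      s iA = 1 - |margA e iA false false - margA e iA true false| := by
    intro iA
    have h1 := hm1 iA false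
    have h2 := hm1 iA true
    simp only [hs_def, hmn_def]
    rcases le_total (margA e iA false false) (margA e iA true false) with h | h
    · rw [min_eq_left h, min_eq_right (by linarith : margA e iA true true ≤ margA e iA false true),
        abs_of_nonpos (by linarith)]
      linarith
    · rw [min_eq_right h, min_eq_left (by linarith : margA e iA false true ≤ margA e iA true true),
        abs_of_nonneg (by linarith)]
      linarith
  have hγ2 : γstar = min (s false) (s true) := by
    rw [hγstar, hs_eq false, hs_eq true, habs false, habs true, min_self, min_self]
  have hγ_le_s : ∀ iA, γstar ≤ s iA := by
    intro iA
    rw [hγ2]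
    cases iA
    · exact min_le_left _ _
    · exact min_le_right _ _
  have hs_pos : ∀ iA, 0 < s iA := fun iA => lt_of_lt_of_le hpos' (hγ_le_s iA)
  have hγ_le_one : γstar ≤ 1 := by
    refine le_trans (hγ_le_s false) ?_
    rw [hs_eq false]
    have := abs_nonneg (margA e false false false - margA e false true false)
    linarith
  -- the optimal causal model
  set e' : Bool × Bool → Bool × Bool → ℝ := fun i o =>
    (mn i.1 o.1 / s i.1) * (e i o / margA e i.1 i.2 o.1) with he'_def
  have hmarg' : ∀ iA iB oA : Bool, margA e' iA iB oA = mn iA oA / s iA := by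
    intro iA iB oA
    have hm := (hpos iA iB oA).ne'
    have hcalc : (∑ oB : Bool, e' (iA, iB) (oA, oB)) =
        (mn iA oA / s iA / margA e iA iB oA) * ∑ oB : Bool, e (iA, iB) (oA, oB) := by
      rw [Finset.mul_sum]
      refine Finset.sum_congr rfl fun oB _ => ?_
      simp only [he'_def]
      ring
    rw [show margA e' iA iB oA = ∑ oB : Bool, e' (iA, iB) (oA, oB) from rfl, hcalc,
      show (∑ oB : Bool, e (iA, iB) (oA, oB)) = margA e iA iB oA from rfl,
      div_mul_cancel₀ _ hm]
  have he'EM : IsEM e' := by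
    constructor
    · intro i o
      have := hnn i o
      have := (hmn_pos i.1 o.1).le
      have := (hs_pos i.1).le
      have := (hpos i.1 i.2 o.1).le
      positivity
    · intro i
      rw [Fintype.sum_prod_type]
      have h1 : ∀ oA : Bool, (∑ oB : Bool, e' i (oA, oB)) = mn i.1 oA / s i.1 := by
        intro oA
        have := hmarg' i.1 i.2 oA
        unfold margA at this
        simpa using this
      simp only [Fintype.sum_bool, h1]
      rw [← add_div]
      have : mn i.1 true + mn i.1 false = s i.1 := by rw [hs_def]; ring
      rw [this, div_self (hs_pos i.1).ne']
  have he'C : CausalAB e' := by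
    intro iA iB iB' oA
    rw [hmarg', hmarg']
  have he'le : ∀ i o, γstar * e' i o ≤ e i o := by
    intro i o
    have hm := hpos i.1 i.2 o.1
    have hkey : γstar * mn i.1 o.1 ≤ s i.1 * margA e i.1 i.2 o.1 :=
      calc γstar * mn i.1 o.1 ≤ s i.1 * mn i.1 o.1 :=
            mul_le_mul_of_nonneg_right (hγ_le_s i.1) (hmn_pos i.1 o.1).le
        _ ≤ s i.1 * margA e i.1 i.2 o.1 :=
            mul_le_mul_of_nonneg_left (hmn_le i.1 i.2 o.1) (hs_pos i.1).le
    have hc1 : γstar * mn i.1 o.1 / (s i.1 * margA e i.1 i.2 o.1) ≤ 1 :=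
      (div_le_one (mul_pos (hs_pos i.1) hm)).mpr hkey
    have heq : γstar * e' i o = (γstar * mn i.1 o.1 / (s i.1 * margA e i.1 i.2 o.1)) * e i o := by
      simp only [he'_def]
      field_simp
    rw [heq]
    calc (γstar * mn i.1 o.1 / (s i.1 * margA e i.1 i.2 o.1)) * e i o
        ≤ 1 * e i o := mul_le_mul_of_nonneg_right hc1 (hnn i o)
      _ = e i o := one_mul _
  refine ⟨⟨e', he'EM, he'C, he'le⟩, ?_⟩
  -- the sup equals γstar
  have hub : ∀ x ∈ {γ : ℝ | γ ∈ Set.Icc (0 : ℝ) 1 ∧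
      ∃ e', IsEM e' ∧ CausalAB e' ∧ ∀ i o, γ * e' i o ≤ e i o}, x ≤ γstar := by
    rintro x ⟨⟨hx0, hx1⟩, f, hfEM, hfC, hfle⟩
    have hμ : ∀ iA iB oA : Bool, x * margA f iA iB oA ≤ margA e iA iB oA := by
      intro iA iB oA
      unfold margA
      rw [Finset.mul_sum]
      exact Finset.sum_le_sum fun oB _ => hfle (iA, iB) (oA, oB)
    have hx_le : ∀ iA, x ≤ s iA := by
      intro iA
      have hμmn : ∀ oA, x * margA f iA false oA ≤ mn iA oA := by
        intro oA
        refine le_min (hμ iA false oA) ?_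
        rw [hfC iA false true oA]
        exact hμ iA true oA
      have hf1 := margA_add f hfEM iA false
      have h0 := hμmn false
      have h1 := hμmn true
      simp only [hs_def]
      nlinarith
    rw [hγ2]
    exact le_min (hx_le false) (hx_le true)
  have hmem : γstar ∈ {γ : ℝ | γ ∈ Set.Icc (0 : ℝ) 1 ∧
      ∃ e', IsEM e' ∧ CausalAB e' ∧ ∀ i o, γ * e' i o ≤ e i o} :=
    ⟨⟨hpos'.le, hγ_le_one⟩, e', he'EM, he'C, he'le⟩
  apply le_antisymm
  · exact Real.sSup_le hub hpos'.le
  · exact le_csSup ⟨1, fun x hx => hx.1.2⟩ hmem
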